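/- Let Δ ⊂ ℝⁿ be a simple polytope and H a nonzero linear functional. Then Δ has at least two H-asymmetric facets. -/

import Mathlib

open MeasureTheory Function Set

noncomputable section

namespace MassLinearPaper

def dotp {n : ℕ} (v x : Fin n → ℝ) : ℝ := ∑ j, v j * x j

def polytope {n N : ℕ} (η : Fin N → Fin n → ℝ) (κ : Fin N → ℝ) : Set (Fin n → ℝ) :=
  {x | ∀ i, dotp (η i) x ≤ κ i}

def facet {n N : ℕ} (η : Fin N → Fin n → ℝ) (κ : Fin N → ℝ) (i : Fin N) : Set (Fin n → ℝ) :=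
  {x ∈ polytope η κ | dotp (η i) x = κ i}

/-- A polytope is simple if at each point the active conormals are linearly independent. -/
def IsSimplePoly {n N : ℕ} (η : Fin N → Fin n → ℝ) (κ : Fin N → ℝ) : Prop :=
  ∀ x ∈ polytope η κ,
    LinearIndependent ℝ (fun i : {i : Fin N // dotp (η i) x = κ i} => η i.1)

/-- Two support vectors give analogous polytopes: the same collections of facets intersect. -/
def Analogous {n N : ℕ} (η : Fin N → Fin n → ℝ) (κ κ' : Fin N → ℝ) : Prop :=
  ∀ I : Finset (Fin N),
    (⋂ i ∈ I, facet η κ' i).Nonempty ↔ (⋂ i ∈ I, facet η κ i).Nonempty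

/-- The chamber of Δ(κ). -/
def chamber {n N : ℕ} (η : Fin N → Fin n → ℝ) (κ : Fin N → ℝ) : Set (Fin N → ℝ) :=
  connectedComponentIn {κ' | IsSimplePoly η κ' ∧ Analogous η κ κ'} κ

/-- Standing hypotheses: simple, bounded, nonempty interior, all facets nonempty. -/
def GoodPolytope {n N : ℕ} (η : Fin N → Fin n → ℝ) (κ : Fin N → ℝ) : Prop :=
  IsSimplePoly η κ ∧ Bornology.IsBounded (polytope η κ) ∧
    (interior (polytope η κ)).Nonempty ∧ ∀ i, (facet η κ i).Nonempty

/-- The center of mass of Δ(κ). -/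
def centroid {n N : ℕ} (η : Fin N → Fin n → ℝ) (κ : Fin N → ℝ) : Fin n → ℝ :=
  ⨍ x in polytope η κ, x

/-- The volume of Δ(κ) as a function of κ. -/
def volFn {n N : ℕ} (η : Fin N → Fin n → ℝ) : (Fin N → ℝ) → ℝ :=
  fun κ => (volume (polytope η κ)).toReal

/-- Partial derivative with respect to the i-th support number. -/
def pd {N : ℕ} (i : Fin N) (f : (Fin N → ℝ) → ℝ) : (Fin N → ℝ) → ℝ :=
  fun κ => fderiv ℝ f κ (Pi.single i 1)

def face {n N : ℕ} (η : Fin N → Fin n → ℝ) (κ : Fin N → ℝ) (S : Finset (Fin N)) :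
    Set (Fin n → ℝ) :=
  ⋂ i ∈ S, facet η κ i

/-- Centroid of a face with respect to Hausdorff measure of the appropriate dimension. -/
def faceCentroid {n N : ℕ} (η : Fin N → Fin n → ℝ) (κ : Fin N → ℝ) (S : Finset (Fin N)) :
    Fin n → ℝ :=
  ⨍ x in face η κ S, x ∂(μH[(n : ℝ) - S.card])

/-- The facet `F i` is H-symmetric: `⟨H, c(κ)⟩` does not depend on `κ i` on the chamber. -/
def SymmFacet {n N : ℕ} (η : Fin N → Fin n → ℝ) (κ : Fin N → ℝ) (H : Fin n → ℝ)
    (i : Fin N) : Prop :=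
  ∀ κ₁ ∈ chamber η κ, ∀ κ₂ ∈ chamber η κ, (∀ j, j ≠ i → κ₁ j = κ₂ j) →
    dotp H (centroid η κ₁) = dotp H (centroid η κ₂)

/-- H is mass linear with coefficients γ and constant C. -/
def MassLinear {n N : ℕ} (η : Fin N → Fin n → ℝ) (κ : Fin N → ℝ) (H : Fin n → ℝ)
    (γ : Fin N → ℝ) (C : ℝ) : Prop :=
  ∀ κ' ∈ chamber η κ, dotp H (centroid η κ') = ∑ i, γ i * κ' i + C

/-- A facet is pervasive if it meets every other facet. -/
def Pervasive {n N : ℕ} (η : Fin N → Fin n → ℝ) (κ : Fin N → ℝ) (i : Fin N) : Prop :=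
  ∀ j, j ≠ i → (facet η κ i ∩ facet η κ j).Nonempty

/-- A facet is flat if the conormals of all other facets meeting it lie in a hyperplane. -/
def FlatFacet {n N : ℕ} (η : Fin N → Fin n → ℝ) (κ : Fin N → ℝ) (i : Fin N) : Prop :=
  ∃ ξ : Fin n → ℝ, ξ ≠ 0 ∧
    ∀ j, j ≠ i → (facet η κ i ∩ facet η κ j).Nonempty → dotp (η j) ξ = 0

/-- Equivalence of facets, via the criterion of Lemma 4.4. -/
def FacetEquiv {n N : ℕ} (η : Fin N → Fin n → ℝ) (i j : Fin N) : Prop :=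
  i = j ∨ ∃ ξ : Fin n → ℝ, dotp (η i) ξ = 1 ∧ dotp (η j) ξ = -1 ∧
    ∀ k, k ≠ i → k ≠ j → dotp (η k) ξ = 0

def IsEquivClass {n N : ℕ} (η : Fin N → Fin n → ℝ) (I : Finset (Fin N)) : Prop :=
  I.Nonempty ∧ (∀ i ∈ I, ∀ j ∈ I, FacetEquiv η i j) ∧
    ∀ i ∈ I, ∀ j, FacetEquiv η i j → j ∈ I

/-- H is inessential. -/
def Inessential {n N : ℕ} (η : Fin N → Fin n → ℝ) (H : Fin n → ℝ) : Prop :=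
  ∃ β : Fin N → ℝ, H = ∑ i, β i • η i ∧
    ∀ I : Finset (Fin N), IsEquivClass η I → ∑ i ∈ I, β i = 0

-- basic dotp lemmas
theorem dotp_comm {n : ℕ} (v x : Fin n → ℝ) : dotp v x = dotp x v := by
  unfold dotp; exact Finset.sum_congr rfl fun j _ => mul_comm _ _

theorem dotp_add_right {n : ℕ} (v x y : Fin n → ℝ) : dotp v (x + y) = dotp v x + dotp v y := by
  unfold dotp; rw [← Finset.sum_add_distrib]; exact Finset.sum_congr rfl fun j _ => by
    simp [mul_add]

theorem dotp_sub_right {n : ℕ} (v x y : Fin n → ℝ) : dotp v (x - y) = dotp v x - dotp v y := by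
  unfold dotp; rw [← Finset.sum_sub_distrib]; exact Finset.sum_congr rfl fun j _ => by
    simp [mul_sub]

theorem dotp_smul_right {n : ℕ} (v x : Fin n → ℝ) (c : ℝ) : dotp v (c • x) = c * dotp v x := by
  unfold dotp; rw [Finset.mul_sum]; exact Finset.sum_congr rfl fun j _ => by
    simp [Pi.smul_apply]; ring

theorem dotp_self_nonneg {n : ℕ} (v : Fin n → ℝ) : 0 ≤ dotp v v :=
  Finset.sum_nonneg fun j _ => mul_self_nonneg _

theorem dotp_self_pos {n : ℕ} {v : Fin n → ℝ} (hv : v ≠ 0) : 0 < dotp v v := by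
  rcases (dotp_self_nonneg v).lt_or_eq with h | h
  · exact h
  · exfalso; apply hv; funext j
    have := (Finset.sum_eq_zero_iff_of_nonneg (fun j _ => mul_self_nonneg (v j))).1 h.symm
    have := this j (Finset.mem_univ j)
    simpa [mul_self_eq_zero] using this

theorem dotp_sum_right {n : ℕ} {ι : Type*} (v : Fin n → ℝ) (s : Finset ι) (f : ι → Fin n → ℝ) :
    dotp v (∑ i ∈ s, f i) = ∑ i ∈ s, dotp v (f i) := by
  classical
  induction s using Finset.induction with
  | empty => simp [dotp]
  | insert a s h ih => rw [Finset.sum_insert h, dotp_add_right, ih, Finset.sum_insert h]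

theorem dotp_abs_le {n : ℕ} (v x : Fin n → ℝ) : |dotp v x| ≤ (∑ j, |v j|) * ‖x‖ := by
  calc |dotp v x| ≤ ∑ j, |v j * x j| := Finset.abs_sum_le_sum_abs _ _
    _ ≤ ∑ j, |v j| * ‖x‖ := Finset.sum_le_sum fun j _ => by
        rw [abs_mul]
        exact mul_le_mul_of_nonneg_left (by simpa [Real.norm_eq_abs] using norm_le_pi_norm x j) (abs_nonneg _)
    _ = (∑ j, |v j|) * ‖x‖ := by rw [Finset.sum_mul]

theorem continuous_dotp {n : ℕ} (v : Fin n → ℝ) : Continuous (fun x => dotp v x) := by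
  unfold dotp
  exact continuous_finset_sum _ fun j _ => (continuous_const.mul (continuous_apply j))

theorem isClosed_polytope {n N : ℕ} (η : Fin N → Fin n → ℝ) (κ : Fin N → ℝ) :
    IsClosed (polytope η κ) := by
  have : polytope η κ = ⋂ i, {x | dotp (η i) x ≤ κ i} := by
    ext x; simp [polytope, Set.mem_iInter]
  rw [this]
  exact isClosed_iInter fun i => isClosed_le (continuous_dotp (η i)) continuous_const

theorem measurableSet_polytope {n N : ℕ} (η : Fin N → Fin n → ℝ) (κ : Fin N → ℝ) :
    MeasurableSet (polytope η κ) := (isClosed_polytope η κ).measurableSet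

theorem polytope_mono {n N : ℕ} (η : Fin N → Fin n → ℝ) {κ κ' : Fin N → ℝ} (h : ∀ i, κ i ≤ κ' i) :
    polytope η κ ⊆ polytope η κ' := fun x hx i => (hx i).trans (h i)


theorem eta_ne_zero {n N : ℕ} {η : Fin N → Fin n → ℝ} {κ : Fin N → ℝ}
    (hsimp : IsSimplePoly η κ) (hfac : ∀ i, (facet η κ i).Nonempty) (i : Fin N) : η i ≠ 0 := by
  obtain ⟨x, hxΔ, hxi⟩ := hfac i
  exact (hsimp x hxΔ).ne_zero ⟨i, hxi⟩

theorem exists_margin_point {n N : ℕ} {η : Fin N → Fin n → ℝ} {κ : Fin N → ℝ}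
    (hη : ∀ i, η i ≠ 0) (hint : (interior (polytope η κ)).Nonempty) :
    ∃ x₀ : Fin n → ℝ, ∃ ρ : ℝ, 0 < ρ ∧ ∀ i, dotp (η i) x₀ + ρ ≤ κ i := by
  obtain ⟨x₀, hx₀⟩ := hint
  obtain ⟨r, hr, hball⟩ := Metric.isOpen_iff.1 isOpen_interior x₀ hx₀
  have hball' : Metric.ball x₀ r ⊆ polytope η κ := hball.trans interior_subset
  have key : ∀ i, ∃ m : ℝ, 0 < m ∧ dotp (η i) x₀ + m ≤ κ i := by
    intro i
    have hpos : 0 < dotp (η i) (η i) := dotp_self_pos (hη i)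
    have hn : 0 < ‖η i‖ := norm_pos_iff.2 (hη i)
    set t : ℝ := r / (2 * ‖η i‖) with ht
    have htpos : 0 < t := div_pos hr (by positivity)
    have hmem : x₀ + t • η i ∈ Metric.ball x₀ r := by
      rw [Metric.mem_ball, dist_eq_norm]
      have : ‖x₀ + t • η i - x₀‖ = t * ‖η i‖ := by
        rw [add_sub_cancel_left, norm_smul, Real.norm_eq_abs, abs_of_pos htpos]
      rw [this, ht]
      rw [div_mul_eq_mul_div]
      rw [div_lt_iff₀ (by positivity)]
      nlinarith [hn, hr]
    have := hball' hmem i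
    rw [dotp_add_right, dotp_smul_right] at this
    exact ⟨t * dotp (η i) (η i), by positivity, this⟩
  choose m hm1 hm2 using key
  rcases isEmpty_or_nonempty (Fin N) with hN | hN
  · exact ⟨x₀, 1, one_pos, fun i => (hN.false i).elim⟩
  · refine ⟨x₀, Finset.univ.inf' ⟨hN.some, Finset.mem_univ _⟩ m, ?_, ?_⟩
    · exact (Finset.lt_inf'_iff _).2 fun i _ => hm1 i
    · intro i
      have : Finset.univ.inf' ⟨hN.some, Finset.mem_univ _⟩ m ≤ m i :=
        Finset.inf'_le _ (Finset.mem_univ i)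
      linarith [hm2 i]

theorem isBounded_polytope_enlarged {n N : ℕ} {η : Fin N → Fin n → ℝ} {κ : Fin N → ℝ}
    (hbd : Bornology.IsBounded (polytope η κ)) {x₀ : Fin n → ℝ} {ρ : ℝ} (hρ : 0 < ρ)
    (hmargin : ∀ i, dotp (η i) x₀ + ρ ≤ κ i) :
    Bornology.IsBounded (polytope η (fun i => κ i + 1)) := by
  obtain ⟨R, hR⟩ := hbd.subset_closedBall 0
  set t : ℝ := 1 / ρ with htdef
  have htpos : 0 < t := by positivity
  apply Bornology.IsBounded.subset (Metric.isBounded_closedBall (x := (0: Fin n → ℝ)) (r := ‖x₀‖ + (1 + t) * (R + ‖x₀‖)))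
  intro y hy
  set z : Fin n → ℝ := x₀ + (1 + t)⁻¹ • (y - x₀) with hz
  have h1t : (0:ℝ) < 1 + t := by linarith
  have hzΔ : z ∈ polytope η κ := by
    intro i
    rw [hz, dotp_add_right, dotp_smul_right, dotp_sub_right]
    have hyi : dotp (η i) y ≤ κ i + 1 := hy i
    have hx0i : dotp (η i) x₀ ≤ κ i - ρ := by linarith [hmargin i]
    have htρ : t * ρ = 1 := by rw [htdef]; field_simp
    rw [← mul_le_mul_iff_right₀ h1t]
    have expand : (1+t) * (dotp (η i) x₀ + (1+t)⁻¹ * (dotp (η i) y - dotp (η i) x₀))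
        = t * dotp (η i) x₀ + dotp (η i) y := by field_simp; ring
    rw [expand]
    nlinarith [mul_le_mul_of_nonneg_left hx0i htpos.le, htρ]
  have hzR : ‖z‖ ≤ R := by simpa using hR hzΔ
  have hyz : y = x₀ + (1 + t) • (z - x₀) := by
    rw [hz, add_sub_cancel_left, smul_smul, mul_inv_cancel₀ h1t.ne', one_smul]
    abel
  rw [mem_closedBall_iff_norm, sub_zero, hyz]
  calc ‖x₀ + (1 + t) • (z - x₀)‖ ≤ ‖x₀‖ + ‖(1 + t) • (z - x₀)‖ := norm_add_le _ _
    _ = ‖x₀‖ + (1 + t) * ‖z - x₀‖ := by rw [norm_smul, Real.norm_eq_abs, abs_of_pos h1t]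
    _ ≤ ‖x₀‖ + (1 + t) * (R + ‖x₀‖) := by
        have : ‖z - x₀‖ ≤ R + ‖x₀‖ := (norm_sub_le _ _).trans (by linarith [hzR])
        nlinarith [h1t]


/-- margin point gives ball inside polytope -/
theorem ball_subset_polytope {n N : ℕ} {η : Fin N → Fin n → ℝ} {κ : Fin N → ℝ}
    {y : Fin n → ℝ} {ρ M : ℝ} (hM : ∀ i, ∑ j, |η i j| ≤ M) (hMpos : 0 < M)
    (hmargin : ∀ i, dotp (η i) y + ρ ≤ κ i) :
    Metric.ball y (ρ / M) ⊆ polytope η κ := by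
  intro x hx i
  have hd : |dotp (η i) (x - y)| ≤ M * ‖x - y‖ := by
    calc |dotp (η i) (x - y)| ≤ (∑ j, |η i j|) * ‖x - y‖ := dotp_abs_le _ _
      _ ≤ M * ‖x - y‖ := mul_le_mul_of_nonneg_right (hM i) (norm_nonneg _)
  have hxy : ‖x - y‖ < ρ / M := by rwa [Metric.mem_ball, dist_eq_norm] at hx
  have : dotp (η i) x - dotp (η i) y ≤ M * (ρ / M) := by
    rw [← dotp_sub_right]
    calc dotp (η i) (x - y) ≤ |dotp (η i) (x - y)| := le_abs_self _
      _ ≤ M * ‖x - y‖ := hd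
      _ ≤ M * (ρ / M) := mul_le_mul_of_nonneg_left hxy.le hMpos.le
  rw [mul_div_cancel₀ _ hMpos.ne'] at this
  linarith [hmargin i]


theorem mem_face_iff {n N : ℕ} {η : Fin N → Fin n → ℝ} {κ : Fin N → ℝ} {S : Finset (Fin N)}
    {x : Fin n → ℝ} : x ∈ face η κ S ↔ ∀ i ∈ S, x ∈ polytope η κ ∧ dotp (η i) x = κ i := by
  simp [face, facet, Set.mem_iInter]

/-- Key quantitative lemma: if a face is empty, it stays empty under perturbation. -/
theorem face_empty_stable {n N : ℕ} {η : Fin N → Fin n → ℝ} {κ : Fin N → ℝ}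
    (hbd1 : Bornology.IsBounded (polytope η (fun i => κ i + 1)))
    (I : Finset (Fin N)) (hI : face η κ I = ∅) :
    ∃ δ : ℝ, 0 < δ ∧ ∀ κ' : Fin N → ℝ, (∀ i, |κ' i - κ i| ≤ δ) → face η κ' I = ∅ := by
  classical
  set K : Set (Fin n → ℝ) := polytope η (fun i => κ i + 1) with hK
  have hKcl : IsClosed K := by
    have : K = ⋂ i, {x | dotp (η i) x ≤ κ i + 1} := by
      ext x; simp [hK, polytope, Set.mem_iInter]
    rw [this]
    exact isClosed_iInter fun i => isClosed_le (continuous_dotp (η i)) continuous_const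
  have hKcp : IsCompact K := Metric.isCompact_of_isClosed_isBounded hKcl hbd1
  -- I is nonempty (else face = univ is nonempty)
  rcases I.eq_empty_or_nonempty with rfl | hIne
  · exfalso
    have : (Set.univ : Set (Fin n → ℝ)).Nonempty := ⟨0, trivial⟩
    rw [show face η κ (∅ : Finset (Fin N)) = Set.univ by simp [face]] at hI
    simp [hI] at this
  set g : (Fin n → ℝ) → ℝ :=
    fun x => (∑ j, max (dotp (η j) x - κ j) 0) + ∑ i ∈ I, |κ i - dotp (η i) x| with hg
  have hgc : Continuous g := by
    apply Continuous.add
    · exact continuous_finset_sum _ fun j _ =>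
        ((continuous_dotp (η j)).sub continuous_const).max continuous_const
    · exact continuous_finset_sum _ fun i _ =>
        (continuous_const.sub (continuous_dotp (η i))).abs
  have hgnonneg : ∀ x, 0 ≤ g x := fun x =>
    add_nonneg (Finset.sum_nonneg fun j _ => le_max_right _ _)
      (Finset.sum_nonneg fun i _ => abs_nonneg _)
  have hgzero : ∀ x, g x = 0 → x ∈ face η κ I := by
    intro x hx
    have h1 : (∑ j, max (dotp (η j) x - κ j) 0) = 0 ∧ (∑ i ∈ I, |κ i - dotp (η i) x|) = 0 := by
      constructor <;>
      · have := hgnonneg x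
        have a1 : 0 ≤ (∑ j, max (dotp (η j) x - κ j) 0) :=
          Finset.sum_nonneg fun j _ => le_max_right _ _
        have a2 : 0 ≤ (∑ i ∈ I, |κ i - dotp (η i) x|) :=
          Finset.sum_nonneg fun i _ => abs_nonneg _
        rw [hg] at hx
        simp only at hx
        linarith
    have hxΔ : x ∈ polytope η κ := by
      intro j
      have := (Finset.sum_eq_zero_iff_of_nonneg (fun j _ => le_max_right (dotp (η j) x - κ j) 0)).1
        h1.1 j (Finset.mem_univ j)
      have := le_max_left (dotp (η j) x - κ j) 0
      rw [‹max (dotp (η j) x - κ j) 0 = 0›] at this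
      linarith
    refine mem_face_iff.2 fun i hi => ⟨hxΔ, ?_⟩
    have := (Finset.sum_eq_zero_iff_of_nonneg (fun i _ => abs_nonneg (κ i - dotp (η i) x))).1
      h1.2 i hi
    have : κ i - dotp (η i) x = 0 := abs_eq_zero.1 this
    linarith
  -- min of g on K
  rcases K.eq_empty_or_nonempty with hKe | hKne
  · refine ⟨1, one_pos, fun κ' hκ' => ?_⟩
    rw [Set.eq_empty_iff_forall_notMem]
    intro x hx
    obtain ⟨i, hiI⟩ := hIne
    have hxΔ : x ∈ polytope η κ' := ((mem_face_iff.1 hx) i hiI).1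
    have : x ∈ K := polytope_mono η (fun i => by have := hκ' i; cases abs_le.1 this; linarith) hxΔ
    rw [hKe] at this; exact this
  obtain ⟨xm, hxmK, hxmmin⟩ := hKcp.exists_isMinOn hKne hgc.continuousOn
  have hδ0 : 0 < g xm := by
    rcases (hgnonneg xm).lt_or_eq with h | h
    · exact h
    · exfalso
      have := hgzero xm h.symm
      rw [hI] at this; exact this
  set δ₀ := g xm with hδ₀
  refine ⟨min 1 (δ₀ / (2 * N + 2)), lt_min one_pos (by positivity), fun κ' hκ' => ?_⟩
  rw [Set.eq_empty_iff_forall_notMem]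
  intro x hx
  obtain ⟨i0, hi0I⟩ := hIne
  have hxΔ : x ∈ polytope η κ' := ((mem_face_iff.1 hx) i0 hi0I).1
  have hδle1 : ∀ i, |κ' i - κ i| ≤ 1 := fun i => (hκ' i).trans (min_le_left _ _)
  have hδle : ∀ i, |κ' i - κ i| ≤ δ₀ / (2 * N + 2) := fun i => (hκ' i).trans (min_le_right _ _)
  have hxK : x ∈ K := polytope_mono η
    (fun i => by have := abs_le.1 (hδle1 i); linarith [this.2]) hxΔ
  have hbound : g x ≤ 2 * N * (δ₀ / (2 * N + 2)) := by
    rw [hg]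
    simp only
    have b1 : (∑ j, max (dotp (η j) x - κ j) 0) ≤ ∑ _j : Fin N, δ₀ / (2 * N + 2) := by
      apply Finset.sum_le_sum
      intro j _
      apply max_le
      · have h1 : dotp (η j) x ≤ κ' j := hxΔ j
        have h2 := (abs_le.1 (hδle j)).2
        linarith
      · positivity
    have b2 : (∑ i ∈ I, |κ i - dotp (η i) x|) ≤ ∑ _i ∈ I, δ₀ / (2 * N + 2) := by
      apply Finset.sum_le_sum
      intro i hi
      have heq : dotp (η i) x = κ' i := ((mem_face_iff.1 hx) i hi).2
      rw [heq, abs_sub_comm]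
      exact hδle i
    have c1 : (∑ _j : Fin N, δ₀ / (2 * N + 2)) = N * (δ₀ / (2 * N + 2)) := by
      simp [Finset.sum_const, Finset.card_univ]
    have c2 : (∑ _i ∈ I, δ₀ / (2 * N + 2)) ≤ N * (δ₀ / (2 * N + 2)) := by
      rw [Finset.sum_const]
      have : (I.card : ℝ) ≤ N := by
        have := I.card_le_univ
        simp only [Finset.card_univ, Fintype.card_fin] at this
        exact_mod_cast this
      have hpos : 0 ≤ δ₀ / (2 * N + 2) := by positivity
      calc I.card • (δ₀ / (2 * N + 2)) = (I.card : ℝ) * (δ₀ / (2 * N + 2)) := nsmul_eq_mul _ _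
        _ ≤ N * (δ₀ / (2 * N + 2)) := by nlinarith
    nlinarith [b1, b2, c1, c2]
  have hlt : 2 * (N:ℝ) * (δ₀ / (2 * N + 2)) < δ₀ := by
    rw [mul_div_assoc']
    rw [div_lt_iff₀ (by positivity)]
    nlinarith [hδ0]
  have hge : δ₀ ≤ g x := hxmmin hxK
  exact absurd ((hge.trans hbound).trans_lt hlt) (lt_irrefl _)

/-- Existence of a dual family to a linearly independent family, w.r.t. dotp. -/
theorem exists_dual_family {n N : ℕ} (η : Fin N → Fin n → ℝ) (T : Finset (Fin N))
    (hind : LinearIndependent ℝ (fun i : {i // i ∈ T} => η i.1)) :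
    ∃ w : Fin N → Fin n → ℝ, ∀ i ∈ T, ∀ k ∈ T,
      dotp (η k) (w i) = if k = i then 1 else 0 := by
  classical
  set V := ({i // i ∈ T} → ℝ)
  let Ψ : V →ₗ[ℝ] V :=
    { toFun := fun c k => dotp (η k.1) (∑ j : {i // i ∈ T}, c j • η j.1)
      map_add' := by
        intro c c'
        funext k
        show dotp (η k.1) (∑ j : {i // i ∈ T}, (c j + c' j) • η j.1)
          = dotp (η k.1) (∑ j : {i // i ∈ T}, c j • η j.1)
            + dotp (η k.1) (∑ j : {i // i ∈ T}, c' j • η j.1)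
        rw [← dotp_add_right, ← Finset.sum_add_distrib]
        congr 1
        exact Finset.sum_congr rfl fun j _ => add_smul _ _ _
      map_smul' := by
        intro a c
        funext k
        show dotp (η k.1) (∑ j : {i // i ∈ T}, (a * c j) • η j.1)
          = a * dotp (η k.1) (∑ j : {i // i ∈ T}, c j • η j.1)
        rw [← dotp_smul_right, Finset.smul_sum]
        congr 1
        exact Finset.sum_congr rfl fun j _ => mul_smul _ _ _ }
  have hinj : Function.Injective Ψ := by
    rw [← LinearMap.ker_eq_bot, LinearMap.ker_eq_bot']
    intro c hc
    set u : Fin n → ℝ := ∑ j : {i // i ∈ T}, c j • η j.1 with hu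
    have hΨc : ∀ k : {i // i ∈ T}, dotp (η k.1) u = 0 := by
      intro k
      have := congrFun hc k
      exact this
    have huu : dotp u u = 0 := by
      rw [dotp_comm, hu, dotp_sum_right]
      apply Finset.sum_eq_zero
      intro j _
      rw [dotp_smul_right, dotp_comm, ← hu, hΨc j, mul_zero]
    have hu0 : u = 0 := by
      by_contra h
      exact absurd huu (dotp_self_pos h).ne'
    have := linearIndependent_iff'.1 hind Finset.univ c (by rw [← hu]; exact hu0)
    funext k
    exact this k (Finset.mem_univ k)
  have hsurj : Function.Surjective Ψ := (LinearMap.injective_iff_surjective).1 hinj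
  have key : ∀ i : {i // i ∈ T}, ∃ w : Fin n → ℝ, ∀ k : {i // i ∈ T},
      dotp (η k.1) w = if k = i then 1 else 0 := by
    intro i
    obtain ⟨c, hc⟩ := hsurj (Pi.single i 1)
    refine ⟨∑ j : {i // i ∈ T}, c j • η j.1, fun k => ?_⟩
    have h2 := congrFun hc k
    simp only [Ψ, LinearMap.coe_mk, AddHom.coe_mk] at h2
    rw [h2]
    by_cases h : k = i
    · subst h; simp
    · simp [Pi.single_apply, h]
  choose w hw using key
  refine ⟨fun i => if h : i ∈ T then w ⟨i, h⟩ else 0, fun i hi k hk => ?_⟩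
  simp only [dif_pos hi]
  have := hw ⟨i, hi⟩ ⟨k, hk⟩
  rw [this]
  by_cases h : k = i
  · subst h; simp
  · rw [if_neg (by simpa [Subtype.ext_iff] using h), if_neg h]

/-- A nonempty face stays nonempty under small perturbations of κ. -/
theorem face_nonempty_stable {n N : ℕ} {η : Fin N → Fin n → ℝ} {κ : Fin N → ℝ}
    (hsimp : IsSimplePoly η κ) (I : Finset (Fin N)) (hI : (face η κ I).Nonempty) :
    ∃ δ : ℝ, 0 < δ ∧ ∀ κ' : Fin N → ℝ, (∀ i, |κ' i - κ i| ≤ δ) →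
      (face η κ' I).Nonempty := by
  classical
  rcases I.eq_empty_or_nonempty with rfl | hIne
  · exact ⟨1, one_pos, fun κ' _ => by simp [face]⟩
  obtain ⟨x, hx⟩ := hI
  obtain ⟨i0, hi0⟩ := hIne
  have hxΔ : x ∈ polytope η κ := ((mem_face_iff.1 hx) i0 hi0).1
  set T : Finset (Fin N) := Finset.univ.filter (fun i => dotp (η i) x = κ i) with hT
  have hIT : I ⊆ T := fun i hi => by
    rw [hT, Finset.mem_filter]
    exact ⟨Finset.mem_univ i, ((mem_face_iff.1 hx) i hi).2⟩
  have hmemT : ∀ i, i ∈ T ↔ dotp (η i) x = κ i := fun i => by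
    rw [hT, Finset.mem_filter]; simp
  have hind : LinearIndependent ℝ (fun i : {i // i ∈ T} => η i.1) := by
    have base := hsimp x hxΔ
    have := base.comp (fun i : {i // i ∈ T} => (⟨i.1, (hmemT i.1).1 i.2⟩ :
        {i : Fin N // dotp (η i) x = κ i})) (fun a b hab =>
      Subtype.ext (by simpa using congrArg Subtype.val hab))
    exact this
  obtain ⟨w, hw⟩ := exists_dual_family η T hind
  -- margins for k ∉ T
  set m : Fin N → ℝ := fun k => κ k - dotp (η k) x with hm
  have hmpos : ∀ k ∉ T, 0 < m k := by
    intro k hk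
    have h1 : dotp (η k) x ≤ κ k := hxΔ k
    have h2 : dotp (η k) x ≠ κ k := fun h => hk ((hmemT k).2 h)
    rw [hm]
    simp only
    cases h1.lt_or_eq with
    | inl h => linarith
    | inr h => exact absurd h h2
  set S : Fin N → ℝ := fun k => ∑ i ∈ T, |dotp (η k) (w i)| with hS
  have hSnonneg : ∀ k, 0 ≤ S k := fun k => Finset.sum_nonneg fun i _ => abs_nonneg _
  set Tc : Finset (Fin N) := Finset.univ.filter (fun k => k ∉ T) with hTc
  set δ : ℝ := if hne : Tc.Nonempty then Tc.inf' hne (fun k => m k / (1 + S k)) else 1 with hδ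
  have hδpos : 0 < δ := by
    rw [hδ]
    split
    · rename_i hne
      rw [Finset.lt_inf'_iff]
      intro k hkTc
      have hk : k ∉ T := (Finset.mem_filter.1 hkTc).2
      exact div_pos (hmpos k hk) (by have := hSnonneg k; linarith)
    · exact one_pos
  refine ⟨δ, hδpos, fun κ' hκ' => ?_⟩
  set x' : Fin n → ℝ := x + ∑ i ∈ T, (κ' i - κ i) • w i with hx'
  have hdotx' : ∀ k, dotp (η k) x' = dotp (η k) x + ∑ i ∈ T, (κ' i - κ i) * dotp (η k) (w i) := by
    intro k
    rw [hx', dotp_add_right, dotp_sum_right]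
    congr 1
    exact Finset.sum_congr rfl fun i _ => dotp_smul_right _ _ _
  have hxT : ∀ k ∈ T, dotp (η k) x' = κ' k := by
    intro k hk
    rw [hdotx' k]
    have : ∀ i ∈ T, (κ' i - κ i) * dotp (η k) (w i) = if k = i then κ' i - κ i else 0 := by
      intro i hi
      rw [hw i hi k hk]
      split <;> simp
    rw [Finset.sum_congr rfl this]
    rw [Finset.sum_ite_eq T k (fun i => κ' i - κ i)]  -- might need different form
    rw [if_pos hk, (hmemT k).1 hk]
    ring
  have hxnotT : ∀ k, k ∉ T → dotp (η k) x' ≤ κ' k := by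
    intro k hk
    have hkTc : k ∈ Tc := by rw [hTc, Finset.mem_filter]; exact ⟨Finset.mem_univ k, hk⟩
    have hδk : δ ≤ m k / (1 + S k) := by
      rw [hδ]
      rw [dif_pos ⟨k, hkTc⟩]
      exact Finset.inf'_le _ hkTc
    have hbound : ∑ i ∈ T, (κ' i - κ i) * dotp (η k) (w i) ≤ δ * S k := by
      calc ∑ i ∈ T, (κ' i - κ i) * dotp (η k) (w i)
          ≤ ∑ i ∈ T, |(κ' i - κ i) * dotp (η k) (w i)| :=
            Finset.sum_le_sum fun i _ => le_abs_self _
        _ ≤ ∑ i ∈ T, δ * |dotp (η k) (w i)| := Finset.sum_le_sum fun i _ => by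
            rw [abs_mul]
            exact mul_le_mul_of_nonneg_right (hκ' i) (abs_nonneg _)
        _ = δ * S k := by rw [hS, Finset.mul_sum]
    have hδk' : δ * (1 + S k) ≤ m k := by
      rw [div_eq_mul_inv] at hδk
      have h1S : (0:ℝ) < 1 + S k := by have := hSnonneg k; linarith
      calc δ * (1 + S k) ≤ (m k * (1 + S k)⁻¹) * (1 + S k) :=
            mul_le_mul_of_nonneg_right hδk h1S.le
        _ = m k := by field_simp
    have hκ'k : κ k - δ ≤ κ' k := by have := abs_le.1 (hκ' k); linarith [this.1]
    rw [hdotx' k]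
    have : dotp (η k) x = κ k - m k := by rw [hm]; ring
    rw [this]
    nlinarith [hbound, hδk', hδpos]
  have hx'Δ : x' ∈ polytope η κ' := by
    intro k
    by_cases hk : k ∈ T
    · exact (hxT k hk).le
    · exact hxnotT k hk
  refine ⟨x', mem_face_iff.2 fun i hi => ⟨hx'Δ, hxT i (hIT hi)⟩⟩

theorem cube_subset_S {n N : ℕ} {η : Fin N → Fin n → ℝ} {κ : Fin N → ℝ}
    (hsimp : IsSimplePoly η κ)
    (hbd1 : Bornology.IsBounded (polytope η (fun i => κ i + 1))) :
    ∃ ε : ℝ, 0 < ε ∧ ∀ κ' : Fin N → ℝ, (∀ i, |κ' i - κ i| ≤ ε) →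
      IsSimplePoly η κ' ∧ Analogous η κ κ' := by
  classical
  have key : ∀ I : Finset (Fin N), ∃ δ : ℝ, 0 < δ ∧ ∀ κ' : Fin N → ℝ,
      (∀ i, |κ' i - κ i| ≤ δ) → ((face η κ' I).Nonempty ↔ (face η κ I).Nonempty) := by
    intro I
    rcases (face η κ I).eq_empty_or_nonempty with hIe | hIne
    · obtain ⟨δ, hδ, hst⟩ := face_empty_stable hbd1 I hIe
      refine ⟨δ, hδ, fun κ' hκ' => ?_⟩
      rw [hIe, hst κ' hκ']
    · obtain ⟨δ, hδ, hst⟩ := face_nonempty_stable hsimp I hIne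
      refine ⟨δ, hδ, fun κ' hκ' => iff_of_true (hst κ' hκ') hIne⟩
  choose δf hδfpos hδf using key
  have hne : (Finset.univ : Finset (Finset (Fin N))).Nonempty := ⟨∅, Finset.mem_univ _⟩
  set ε : ℝ := Finset.univ.inf' hne δf with hε
  have hεpos : 0 < ε := by
    rw [hε, Finset.lt_inf'_iff]
    exact fun I _ => hδfpos I
  have hεle : ∀ I, ε ≤ δf I := fun I => Finset.inf'_le _ (Finset.mem_univ I)
  refine ⟨ε, hεpos, fun κ' hκ' => ?_⟩
  have hfaces : ∀ I, (face η κ' I).Nonempty ↔ (face η κ I).Nonempty :=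
    fun I => hδf I κ' (fun i => (hκ' i).trans (hεle I))
  constructor
  · -- IsSimplePoly η κ'
    intro x' hx'
    set T' : Finset (Fin N) := Finset.univ.filter (fun i => dotp (η i) x' = κ' i) with hT'
    have hmemT' : ∀ i, i ∈ T' ↔ dotp (η i) x' = κ' i := fun i => by
      rw [hT', Finset.mem_filter]; simp
    have hx'f : x' ∈ face η κ' T' := mem_face_iff.2 fun i hi => ⟨hx', (hmemT' i).1 hi⟩
    obtain ⟨y, hy⟩ := (hfaces T').1 ⟨x', hx'f⟩
    rcases T'.eq_empty_or_nonempty with hTe | hTne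
    · -- empty index type
      have : IsEmpty {i : Fin N // dotp (η i) x' = κ' i} := by
        constructor
        intro i
        have : i.1 ∈ T' := (hmemT' i.1).2 i.2
        rw [hTe] at this
        exact absurd this (Finset.notMem_empty _)
      exact linearIndependent_empty_type
    · obtain ⟨i1, hi1⟩ := hTne
      have hyΔ : y ∈ polytope η κ := ((mem_face_iff.1 hy) i1 hi1).1
      have hyeq : ∀ i ∈ T', dotp (η i) y = κ i := fun i hi => ((mem_face_iff.1 hy) i hi).2
      have base := hsimp y hyΔ
      have comp := base.comp
        (fun i : {i : Fin N // dotp (η i) x' = κ' i} =>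
          (⟨i.1, hyeq i.1 ((hmemT' i.1).2 i.2)⟩ : {i : Fin N // dotp (η i) y = κ i}))
        (fun a b hab => Subtype.ext (by simpa using congrArg Subtype.val hab))
      exact comp
  · -- Analogous
    intro I
    exact hfaces I

theorem cube_subset_chamber {n N : ℕ} {η : Fin N → Fin n → ℝ} {κ : Fin N → ℝ}
    {ε : ℝ} (hεpos : 0 < ε)
    (hS : ∀ κ' : Fin N → ℝ, (∀ i, |κ' i - κ i| ≤ ε) → IsSimplePoly η κ' ∧ Analogous η κ κ') :
    Metric.closedBall κ ε ⊆ chamber η κ := by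
  have hsub : Metric.closedBall κ ε ⊆ {κ' | IsSimplePoly η κ' ∧ Analogous η κ κ'} := by
    intro κ' hκ'
    apply hS
    intro i
    have h1 : dist κ' κ ≤ ε := Metric.mem_closedBall.1 hκ'
    have h2 : dist (κ' i) (κ i) ≤ dist κ' κ := dist_le_pi_dist κ' κ i
    rw [Real.dist_eq] at h2
    linarith
  exact IsPreconnected.subset_connectedComponentIn
    ((convex_closedBall κ ε).isPreconnected)
    (Metric.mem_closedBall_self hεpos.le) hsub

theorem polytope_translate {n N : ℕ} (η : Fin N → Fin n → ℝ) (κ : Fin N → ℝ) (v : Fin n → ℝ) :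
    polytope η (fun i => κ i + dotp (η i) v) = (fun x => x - v) ⁻¹' polytope η κ := by
  ext x
  simp only [polytope, Set.mem_setOf_eq, Set.mem_preimage, dotp_sub_right]
  constructor
  · intro h i; linarith [h i]
  · intro h i; linarith [h i]

theorem centroid_translate {n N : ℕ} (η : Fin N → Fin n → ℝ) (κ : Fin N → ℝ) (v : Fin n → ℝ)
    (hbd : Bornology.IsBounded (polytope η κ)) (hvol : 0 < volume (polytope η κ)) :
    centroid η (fun i => κ i + dotp (η i) v) = centroid η κ + v := by
  have hmeas := measurableSet_polytope η κ
  have hcompact : IsCompact (polytope η κ) :=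
    Metric.isCompact_of_isClosed_isBounded (isClosed_polytope η κ) hbd
  have hfin : volume (polytope η κ) < ⊤ := hcompact.measure_lt_top
  have hmp : MeasurePreserving (fun x : Fin n → ℝ => x - v) volume volume :=
    measurePreserving_sub_right volume v
  have hemb : MeasurableEmbedding (fun x : Fin n → ℝ => x - v) :=
    (MeasurableEquiv.subRight v).measurableEmbedding
  set A := polytope η κ with hA
  set B := (fun x : Fin n → ℝ => x - v) ⁻¹' A with hB
  have hvolB : volume B = volume A := hmp.measure_preimage hmeas.nullMeasurableSet
  have hintA : IntegrableOn (fun x : Fin n → ℝ => x) A volume :=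
    ContinuousOn.integrableOn_compact hcompact continuousOn_id
  -- change of variables for the integral
  have hsub : ∫ x in B, (x - v) ∂volume = ∫ y in A, y ∂volume :=
    hmp.setIntegral_preimage_emb hemb (fun y => y) A
  have hintB : IntegrableOn (fun x : Fin n → ℝ => x - v) B volume := by
    have h1 : MeasurePreserving (fun x : Fin n → ℝ => x - v)
        (volume.restrict B) (volume.restrict A) := hmp.restrict_preimage_emb hemb A
    have h2 := (h1.integrable_comp_emb (g := fun y : Fin n → ℝ => y) hemb).2 hintA
    exact h2
  have hintBc : IntegrableOn (fun _ : Fin n → ℝ => v) B volume := by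
    rw [IntegrableOn, integrable_const_iff]
    right
    refine ⟨?_⟩
    rw [Measure.restrict_apply_univ, hvolB]
    exact hfin
  have hintBid : IntegrableOn (fun x : Fin n → ℝ => x) B volume := by
    have h2 := hintB.add hintBc
    have h3 : (fun x : Fin n → ℝ => x - v) + (fun _ => v) = fun x => x := by
      funext x; simp
    rwa [IntegrableOn, ← h3]
  have hsplit : ∫ x in B, x ∂volume
      = (∫ x in B, (x - v) ∂volume) + (volume B).toReal • v := by
    have : ∫ x in B, x ∂volume = ∫ x in B, ((x - v) + v) ∂volume := by
      congr 1; funext x; abel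
    rw [this, integral_add hintB hintBc, setIntegral_const]; rfl
  -- assemble
  have hcent : centroid η (fun i => κ i + dotp (η i) v)
      = (volume A).toReal⁻¹ • ((∫ y in A, y ∂volume) + (volume A).toReal • v) := by
    rw [centroid, polytope_translate, setAverage_eq, measureReal_def, ← hB, hvolB, hsplit, hsub, hvolB]
  rw [hcent, centroid, setAverage_eq, measureReal_def, smul_add, ← hA]
  congr 1
  rw [smul_smul, inv_mul_cancel₀, one_smul]
  rw [ENNReal.toReal_ne_zero]
  exact ⟨hvol.ne', hfin.ne⟩


theorem polytope_dilate {n N : ℕ} (η : Fin N → Fin n → ℝ) (κ : Fin N → ℝ) {c : ℝ} (hc : 0 < c) :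
    polytope η (fun i => c * κ i) = (fun x => c⁻¹ • x) ⁻¹' polytope η κ := by
  ext x
  simp only [polytope, Set.mem_setOf_eq, Set.mem_preimage, dotp_smul_right]
  constructor
  · intro h i
    rw [inv_mul_le_iff₀ hc]
    linarith [h i]
  · intro h i
    have := h i
    rw [inv_mul_le_iff₀ hc] at this
    linarith [this]

theorem centroid_dilate {n N : ℕ} (η : Fin N → Fin n → ℝ) (κ : Fin N → ℝ) {c : ℝ} (hc : 0 < c)
    (hbd : Bornology.IsBounded (polytope η κ)) (hvol : 0 < volume (polytope η κ)) :
    centroid η (fun i => c * κ i) = c • centroid η κ := by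
  have hmeas := measurableSet_polytope η κ
  have hcompact : IsCompact (polytope η κ) :=
    Metric.isCompact_of_isClosed_isBounded (isClosed_polytope η κ) hbd
  have hfin : volume (polytope η κ) < ⊤ := hcompact.measure_lt_top
  set d := Module.finrank ℝ (Fin n → ℝ) with hd
  set A := polytope η κ with hA
  set B := (fun x : Fin n → ℝ => c⁻¹ • x) ⁻¹' A with hB
  have hmeasB : MeasurableSet B := hmeas.preimage (measurable_const_smul c⁻¹)
  have hcd : (0:ℝ) < c ^ d := pow_pos hc d
  have habs : |((c⁻¹ : ℝ) ^ d)⁻¹| = c ^ d := by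
    rw [← inv_pow, inv_inv, abs_of_pos hcd]
  have hvolB : volume B = ENNReal.ofReal (c ^ d) * volume A := by
    rw [hB, Measure.addHaar_preimage_smul volume (inv_ne_zero hc.ne') A, ← hd, habs]
  have hintA : IntegrableOn (fun x : Fin n → ℝ => x) A volume :=
    ContinuousOn.integrableOn_compact hcompact continuousOn_id
  have hind : ∀ x : Fin n → ℝ, B.indicator (fun y => y) x
      = c • (A.indicator (fun y => y) (c⁻¹ • x)) := by
    intro x
    by_cases hx : c⁻¹ • x ∈ A
    · rw [Set.indicator_of_mem hx, Set.indicator_of_mem (by exact hx), smul_smul,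
        mul_inv_cancel₀ hc.ne', one_smul]
    · rw [Set.indicator_of_notMem hx, Set.indicator_of_notMem (by exact hx), smul_zero]
  have hint : ∫ x in B, x ∂volume = (c * c ^ d) • ∫ x in A, x ∂volume := by
    rw [← integral_indicator hmeasB]
    have : ∫ x, B.indicator (fun y => y) x ∂volume
        = ∫ x, c • (A.indicator (fun y => y) (c⁻¹ • x)) ∂volume := by
      congr 1; funext x; exact hind x
    rw [this, integral_smul]
    rw [Measure.integral_comp_smul volume (A.indicator (fun y => y)) c⁻¹, ← hd, habs]
    rw [integral_indicator hmeas, smul_smul]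
  rw [centroid, centroid, polytope_dilate η κ hc, setAverage_eq, setAverage_eq, measureReal_def, measureReal_def, ← hA, ← hB,
    hvolB, hint]
  rw [ENNReal.toReal_mul, ENNReal.toReal_ofReal hcd.le]
  rw [smul_smul, smul_smul]
  congr 1
  have hvA : (volume A).toReal ≠ 0 := by
    rw [ENNReal.toReal_ne_zero]; exact ⟨hvol.ne', hfin.ne⟩
  rw [mul_inv]
  field_simp

/-- dotp commutes with the centroid (set average). -/
theorem dotp_centroid {n N : ℕ} (η : Fin N → Fin n → ℝ) (κ : Fin N → ℝ) (u : Fin n → ℝ)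
    (hbd : Bornology.IsBounded (polytope η κ)) :
    dotp u (centroid η κ)
      = (volume (polytope η κ)).toReal⁻¹ * ∫ x in polytope η κ, dotp u x ∂volume := by
  have hcompact : IsCompact (polytope η κ) :=
    Metric.isCompact_of_isClosed_isBounded (isClosed_polytope η κ) hbd
  have hintA : IntegrableOn (fun x : Fin n → ℝ => x) (polytope η κ) volume :=
    ContinuousOn.integrableOn_compact hcompact continuousOn_id
  set L : (Fin n → ℝ) →L[ℝ] ℝ := LinearMap.toContinuousLinearMap
    { toFun := fun x => dotp u x
      map_add' := fun x y => dotp_add_right u x y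
      map_smul' := fun c x => by simp [dotp_smul_right] } with hL
  have hLapp : ∀ x, L x = dotp u x := fun x => rfl
  rw [centroid, setAverage_eq, ← hLapp, L.map_smul]
  rw [← ContinuousLinearMap.integral_comp_comm L hintA]
  simp only [smul_eq_mul]
  congr 1

/-- The centroid is strictly inside each halfspace, given an interior margin point. -/
theorem dotp_centroid_lt {n N : ℕ} {η : Fin N → Fin n → ℝ} {κ : Fin N → ℝ} (i₀ : Fin N)
    {x₀ : Fin n → ℝ} {ρ M : ℝ} (hρ : 0 < ρ) (hM : ∀ i, ∑ j, |η i j| ≤ M) (hMpos : 0 < M)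
    (hmargin : ∀ i, dotp (η i) x₀ + ρ ≤ κ i)
    (hbd : Bornology.IsBounded (polytope η κ)) :
    dotp (η i₀) (centroid η κ) < κ i₀ := by
  set A := polytope η κ with hA
  have hmeas := measurableSet_polytope η κ
  have hcompact : IsCompact A :=
    Metric.isCompact_of_isClosed_isBounded (isClosed_polytope η κ) hbd
  have hfin : volume A < ⊤ := hcompact.measure_lt_top
  set u := η i₀ with hu
  set h : (Fin n → ℝ) → ℝ := fun x => κ i₀ - dotp u x with hh
  have hball : Metric.ball x₀ (ρ / M) ⊆ A := ball_subset_polytope hM hMpos hmargin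
  set B := Metric.ball x₀ (ρ / (2 * M)) with hBdef
  have hBsub : B ⊆ A := by
    apply Subset.trans _ hball
    apply Metric.ball_subset_ball
    rw [div_le_div_iff₀ (by positivity) hMpos]
    nlinarith [hρ, hMpos]
  have hBpos : 0 < volume B := Metric.measure_ball_pos volume x₀ (by positivity)
  have hBfin : volume B < ⊤ := measure_ball_lt_top
  have hApos : 0 < volume A := lt_of_lt_of_le hBpos (measure_mono hBsub)
  have hVpos : 0 < (volume A).toReal := ENNReal.toReal_pos hApos.ne' hfin.ne
  -- h ≥ ρ/2 on B
  have hhB : ∀ x ∈ B, ρ / 2 ≤ h x := by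
    intro x hx
    have hdist : ‖x - x₀‖ < ρ / (2 * M) := by
      rwa [Metric.mem_ball, dist_eq_norm] at hx
    have : |dotp u (x - x₀)| ≤ M * ‖x - x₀‖ :=
      (dotp_abs_le u (x - x₀)).trans (mul_le_mul_of_nonneg_right (hM i₀) (norm_nonneg _))
    have h2 : dotp u x - dotp u x₀ < ρ / 2 := by
      rw [← dotp_sub_right]
      calc dotp u (x - x₀) ≤ |dotp u (x - x₀)| := le_abs_self _
        _ ≤ M * ‖x - x₀‖ := this
        _ < M * (ρ / (2 * M)) := by
            exact mul_lt_mul_of_pos_left hdist hMpos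
        _ = ρ / 2 := by field_simp
    have h3 : dotp u x₀ + ρ ≤ κ i₀ := hmargin i₀
    rw [hh]
    simp only
    linarith
  have hhcont : Continuous h := continuous_const.sub (continuous_dotp u)
  have hhint : IntegrableOn h A volume :=
    ContinuousOn.integrableOn_compact hcompact hhcont.continuousOn
  have hhnonneg : ∀ x ∈ A, 0 ≤ h x := by
    intro x hx
    have := hx i₀
    rw [hh]; simp only; rw [hu]; linarith [hx i₀]
  -- ∫_A h > 0
  have hint_pos : 0 < ∫ x in A, h x ∂volume := by
    have step1 : ρ / 2 * (volume B).toReal ≤ ∫ x in B, h x ∂volume := by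
      have := setIntegral_ge_of_const_le measurableSet_ball hBfin.ne hhB
        (hhint.mono_set hBsub)
      rw [smul_eq_mul, measureReal_def, mul_comm] at this
      exact this
    have step2 : ∫ x in B, h x ∂volume ≤ ∫ x in A, h x ∂volume := by
      apply setIntegral_mono_set hhint ?_ ?_
      · filter_upwards [ae_restrict_mem hmeas] with x hx
        exact hhnonneg x hx
      · exact HasSubset.Subset.eventuallyLE hBsub
    have hBtr : 0 < (volume B).toReal := ENNReal.toReal_pos hBpos.ne' hBfin.ne
    nlinarith [step1, step2, hBtr, hρ]
  -- conclude
  have hsplit : ∫ x in A, h x ∂volume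
      = κ i₀ * (volume A).toReal - ∫ x in A, dotp u x ∂volume := by
    have hintu : IntegrableOn (fun x => dotp u x) A volume :=
      ContinuousOn.integrableOn_compact hcompact (continuous_dotp u).continuousOn
    have hintc : IntegrableOn (fun _ : Fin n → ℝ => κ i₀) A volume := by
      rw [IntegrableOn, integrable_const_iff]; right
      exact ⟨by rwa [Measure.restrict_apply_univ]⟩
    rw [hh]
    simp only
    rw [integral_sub hintc hintu, setIntegral_const, smul_eq_mul, mul_comm, measureReal_def]
  rw [dotp_centroid η κ u hbd, ← hA]
  rw [hsplit] at hint_pos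
  have : (volume A).toReal⁻¹ * ∫ x in A, dotp u x ∂volume
      < (volume A).toReal⁻¹ * (κ i₀ * (volume A).toReal) := by
    apply mul_lt_mul_of_pos_left _ (by positivity)
    linarith
  calc (volume A).toReal⁻¹ * ∫ x in A, dotp u x ∂volume
      < (volume A).toReal⁻¹ * (κ i₀ * (volume A).toReal) := this
    _ = κ i₀ := by field_simp

theorem chain_eq {n N : ℕ} (η : Fin N → Fin n → ℝ) (κ : Fin N → ℝ) (H : Fin n → ℝ)
    (i₀ : Fin N) {ε : ℝ} (hε : 0 < ε)
    (hchamber : Metric.closedBall κ ε ⊆ chamber η κ)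
    (hsym : ∀ j, j ≠ i₀ → SymmFacet η κ H j) :
    ∀ S : Finset (Fin N), i₀ ∉ S → ∀ κ₁ κ₂ : Fin N → ℝ,
      κ₁ ∈ Metric.closedBall κ ε → κ₂ ∈ Metric.closedBall κ ε →
      (∀ j, j ∉ S → κ₁ j = κ₂ j) →
      dotp H (centroid η κ₁) = dotp H (centroid η κ₂) := by
  classical
  intro S
  induction S using Finset.induction_on with
  | empty =>
    intro _ κ₁ κ₂ _ _ hagree
    have : κ₁ = κ₂ := funext fun j => hagree j (Finset.notMem_empty j)
    rw [this]
  | @insert a S ha ih =>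
    intro hi₀ κ₁ κ₂ h1 h2 hagree
    have hai₀ : a ≠ i₀ := fun h => hi₀ (h ▸ Finset.mem_insert_self a S)
    have hi₀S : i₀ ∉ S := fun h => hi₀ (Finset.mem_insert_of_mem h)
    set κ₃ := Function.update κ₁ a (κ₂ a) with hκ₃
    have hc1 : ∀ i, |κ₁ i - κ i| ≤ ε := by
      intro i
      have := (dist_pi_le_iff hε.le).1 (Metric.mem_closedBall.1 h1) i
      rwa [Real.dist_eq] at this
    have hc2 : ∀ i, |κ₂ i - κ i| ≤ ε := by
      intro i
      have := (dist_pi_le_iff hε.le).1 (Metric.mem_closedBall.1 h2) i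
      rwa [Real.dist_eq] at this
    have h3mem : κ₃ ∈ Metric.closedBall κ ε := by
      rw [Metric.mem_closedBall]
      rw [dist_pi_le_iff hε.le]
      intro i
      rw [Real.dist_eq]
      by_cases hia : i = a
      · subst hia
        rw [hκ₃, Function.update_self]
        exact hc2 i
      · rw [hκ₃, Function.update_of_ne hia]
        exact hc1 i
    have step1 : dotp H (centroid η κ₁) = dotp H (centroid η κ₃) := by
      apply hsym a hai₀ κ₁ (hchamber h1) κ₃ (hchamber h3mem)
      intro j hj
      rw [hκ₃, Function.update_of_ne hj]
    have step2 : dotp H (centroid η κ₃) = dotp H (centroid η κ₂) := by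
      apply ih hi₀S κ₃ κ₂ h3mem h2
      intro j hjS
      by_cases hja : j = a
      · subst hja
        rw [hκ₃, Function.update_self]
      · rw [hκ₃, Function.update_of_ne hja]
        exact hagree j (fun hmem => by
          rcases Finset.mem_insert.1 hmem with h | h
          · exact hja h
          · exact hjS h)
    rw [step1, step2]

end MassLinearPaper

open MassLinearPaper

/-- A nonzero linear functional has at least two asymmetric facets. -/
theorem stmt7 {n N : ℕ} (η : Fin N → Fin n → ℝ) (κ : Fin N → ℝ) (H : Fin n → ℝ)
    (hΔ : GoodPolytope η κ) (hH : H ≠ 0) :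
    ∃ i j : Fin N, i ≠ j ∧ ¬ SymmFacet η κ H i ∧ ¬ SymmFacet η κ H j := by
  classical
  obtain ⟨hsimp, hbd, hint, hfac⟩ := hΔ
  have hHj : ∃ j₀ : Fin n, H j₀ ≠ 0 := by
    by_contra hc
    push_neg at hc
    exact hH (funext hc)
  obtain ⟨j₀, hj₀⟩ := hHj
  have hNne : Nonempty (Fin N) := by
    rcases isEmpty_or_nonempty (Fin N) with he | h
    · exfalso
      have huniv : polytope η κ = Set.univ := by
        ext x
        simp only [polytope, Set.mem_setOf_eq, Set.mem_univ, iff_true]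
        intro i
        exact he.elim i
      rw [huniv] at hbd
      obtain ⟨R, hR⟩ := hbd.subset_closedBall 0
      have hmem : (fun _ : Fin n => |R| + 1) ∈ Metric.closedBall (0 : Fin n → ℝ) R :=
        hR trivial
      rw [Metric.mem_closedBall, dist_zero_right] at hmem
      have hnorm : ‖(fun _ : Fin n => |R| + 1 : Fin n → ℝ)‖ = |R| + 1 := by
        have hne : Nonempty (Fin n) := ⟨j₀⟩
        rw [pi_norm_const ((|R| : ℝ) + 1), Real.norm_eq_abs,
          abs_of_pos (by positivity : (0:ℝ) < |R| + 1)]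
      rw [hnorm] at hmem
      have := le_abs_self R
      linarith
    · exact h
  by_contra hcon
  push_neg at hcon
  obtain ⟨i₀, hsym⟩ : ∃ i₀ : Fin N, ∀ j, j ≠ i₀ → SymmFacet η κ H j := by
    by_cases hex : ∃ i, ¬ SymmFacet η κ H i
    · obtain ⟨i₀, hi₀⟩ := hex
      exact ⟨i₀, fun j hj => hcon i₀ j (Ne.symm hj) hi₀⟩
    · push_neg at hex
      exact ⟨hNne.some, fun j _ => hex j⟩
  have hη : ∀ i, η i ≠ 0 := eta_ne_zero hsimp hfac
  obtain ⟨x₀, ρ, hρ, hmargin⟩ := exists_margin_point hη hint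
  have hMne : (Finset.univ : Finset (Fin N)).Nonempty := ⟨hNne.some, Finset.mem_univ _⟩
  set M : ℝ := Finset.univ.sup' hMne (fun i => ∑ j, |η i j|) with hMdef
  have hM : ∀ i, ∑ j, |η i j| ≤ M := fun i => by
    rw [hMdef]; exact Finset.le_sup' (fun i => ∑ j, |η i j|) (Finset.mem_univ i)
  have hMpos : 0 < M := by
    have h1 : ∑ j, |η hNne.some j| ≤ M := hM _
    have h2 : 0 < ∑ j, |η hNne.some j| := by
      by_contra hc
      push_neg at hc
      have hnn : 0 ≤ ∑ j, |η hNne.some j| := Finset.sum_nonneg fun _ _ => abs_nonneg _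
      have hz : ∀ j, |η hNne.some j| = 0 := fun j =>
        (Finset.sum_eq_zero_iff_of_nonneg (fun j _ => abs_nonneg (η hNne.some j))).1
          (le_antisymm hc hnn) j (Finset.mem_univ j)
      exact hη hNne.some (funext fun j => abs_eq_zero.1 (hz j))
    linarith
  have hvol : 0 < volume (polytope η κ) := by
    have hball := ball_subset_polytope hM hMpos hmargin
    calc (0:ENNReal) < volume (Metric.ball x₀ (ρ / M)) :=
          Metric.measure_ball_pos _ _ (by positivity)
      _ ≤ volume (polytope η κ) := measure_mono hball
  obtain ⟨ε, hε, hcube⟩ := cube_subset_S hsimp (isBounded_polytope_enlarged hbd hρ hmargin)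
  have hchamber : Metric.closedBall κ ε ⊆ chamber η κ := cube_subset_chamber hε hcube
  set q : ℝ := dotp (η i₀) (η i₀) with hq
  have hqpos : 0 < q := dotp_self_pos (hη i₀)
  have hself : κ ∈ Metric.closedBall κ ε := Metric.mem_closedBall_self hε.le
  -- Step A : translations orthogonal to η i₀ do not move ⟨H, centroid⟩
  have stepA : ∀ v : Fin n → ℝ, dotp (η i₀) v = 0 → dotp H v = 0 := by
    intro v hv
    set C : ℝ := ∑ i, |dotp (η i) v| with hC
    have hCnn : 0 ≤ C := Finset.sum_nonneg fun _ _ => abs_nonneg _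
    set t : ℝ := ε / (1 + C) with ht
    have htpos : 0 < t := by positivity
    set κ₁ : Fin N → ℝ := fun i => κ i + dotp (η i) (t • v) with hκ₁
    have hd : ∀ i, dotp (η i) (t • v) = t * dotp (η i) v := fun i => dotp_smul_right _ _ _
    have hκ₁mem : κ₁ ∈ Metric.closedBall κ ε := by
      rw [Metric.mem_closedBall, dist_pi_le_iff hε.le]
      intro i
      rw [Real.dist_eq, hκ₁]
      simp only
      rw [add_sub_cancel_left, hd i, abs_mul, abs_of_pos htpos]
      have h1 : |dotp (η i) v| ≤ C :=
        Finset.single_le_sum (f := fun i => |dotp (η i) v|) (fun _ _ => abs_nonneg _)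
          (Finset.mem_univ i)
      calc t * |dotp (η i) v| ≤ t * C := mul_le_mul_of_nonneg_left h1 htpos.le
        _ ≤ t * (1 + C) := mul_le_mul_of_nonneg_left (by linarith) htpos.le
        _ = ε := by rw [ht]; field_simp
    have hcent : centroid η κ₁ = centroid η κ + t • v :=
      centroid_translate η κ (t • v) hbd hvol
    have hκ₁i₀ : κ₁ i₀ = κ i₀ := by
      rw [hκ₁]
      simp only
      rw [hd i₀, hv, mul_zero, add_zero]
    have hagree : ∀ j, j ∉ Finset.univ.erase i₀ → κ₁ j = κ j := by
      intro j hj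
      have hji : j = i₀ := by
        by_contra hne
        exact hj (Finset.mem_erase.2 ⟨hne, Finset.mem_univ j⟩)
      rw [hji]
      exact hκ₁i₀
    have heq := chain_eq η κ H i₀ hε hchamber hsym (Finset.univ.erase i₀)
      (Finset.notMem_erase i₀ _) κ₁ κ hκ₁mem hself hagree
    rw [hcent, dotp_add_right, dotp_smul_right] at heq
    have h0 : t * dotp H v = 0 := by linarith
    rcases mul_eq_zero.1 h0 with h | h
    · exact absurd h htpos.ne'
    · exact h
  -- Step B : H is a multiple of η i₀
  set a : ℝ := dotp (η i₀) H / q with ha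
  have hHau : H = a • η i₀ := by
    set w : Fin n → ℝ := H - a • η i₀ with hw
    have h1 : dotp (η i₀) w = 0 := by
      rw [hw, dotp_sub_right, dotp_smul_right, ha]
      have hq0 : q ≠ 0 := hqpos.ne'
      simp only [hq] at hq0 ⊢
      rw [div_mul_cancel₀ _ hq0, sub_self]
    have h2 : dotp H w = 0 := stepA w h1
    have h3 : dotp w w = 0 := by
      have e1 : dotp w w = dotp w H - a * dotp w (η i₀) := by
        calc dotp w w = dotp w (H - a • η i₀) := by rw [hw]
          _ = dotp w H - dotp w (a • η i₀) := dotp_sub_right _ _ _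
          _ = dotp w H - a * dotp w (η i₀) := by rw [dotp_smul_right]
      rw [e1, dotp_comm w H, h2, dotp_comm w (η i₀), h1, mul_zero, sub_zero]
    have hwz : w = 0 := by
      by_contra hc
      exact absurd h3 (dotp_self_pos hc).ne'
    have : H - a • η i₀ = 0 := by rw [← hw]; exact hwz
    rwa [sub_eq_zero] at this
  have hane : a ≠ 0 := fun h => hH (by rw [hHau, h, zero_smul])
  -- Step C : dilation gives ⟨H, centroid⟩ = a * κ i₀
  set C1 : ℝ := ∑ i, |κ i| with hC1
  have hC1nn : 0 ≤ C1 := Finset.sum_nonneg fun _ _ => abs_nonneg _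
  set C2 : ℝ := (|κ i₀| / q) * ∑ i, |dotp (η i) (η i₀)| with hC2
  have hC2nn : 0 ≤ C2 :=
    mul_nonneg (div_nonneg (abs_nonneg _) hqpos.le)
      (Finset.sum_nonneg fun _ _ => abs_nonneg _)
  set s : ℝ := ε / (1 + C1 + C2) with hs
  have hspos : 0 < s := by positivity
  have hseq : s * (1 + C1 + C2) = ε := by
    rw [hs]
    field_simp
  set κs : Fin N → ℝ := fun i => (1 + s) * κ i with hκs
  have hκsmem : κs ∈ Metric.closedBall κ ε := by
    rw [Metric.mem_closedBall, dist_pi_le_iff hε.le]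
    intro i
    rw [Real.dist_eq, hκs]
    simp only
    rw [show (1 + s) * κ i - κ i = s * κ i by ring, abs_mul, abs_of_pos hspos]
    have h1 : |κ i| ≤ C1 :=
      Finset.single_le_sum (f := fun i => |κ i|) (fun _ _ => abs_nonneg _) (Finset.mem_univ i)
    nlinarith [hspos, hC2nn, hseq, mul_le_mul_of_nonneg_left h1 hspos.le]
  set v' : Fin n → ℝ := ((s * κ i₀) / q) • η i₀ with hv'
  have hdv' : ∀ i, dotp (η i) v' = ((s * κ i₀) / q) * dotp (η i) (η i₀) := fun i => by
    rw [hv', dotp_smul_right]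
  set κ₂ : Fin N → ℝ := fun i => κ i + dotp (η i) v' with hκ₂
  have hκ₂mem : κ₂ ∈ Metric.closedBall κ ε := by
    rw [Metric.mem_closedBall, dist_pi_le_iff hε.le]
    intro i
    rw [Real.dist_eq, hκ₂]
    simp only
    rw [add_sub_cancel_left, hdv' i, abs_mul, abs_div, abs_mul, abs_of_pos hspos,
      abs_of_pos hqpos]
    have h1 : |dotp (η i) (η i₀)| ≤ ∑ i, |dotp (η i) (η i₀)| :=
      Finset.single_le_sum (f := fun i => |dotp (η i) (η i₀)|) (fun _ _ => abs_nonneg _)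
        (Finset.mem_univ i)
    have h2 : s * |κ i₀| / q * |dotp (η i) (η i₀)| ≤ s * C2 := by
      rw [hC2]
      rw [div_mul_eq_mul_div, div_le_iff₀ hqpos]
      have expand : s * (|κ i₀| / q * ∑ i, |dotp (η i) (η i₀)|) * q
          = s * (|κ i₀| * ∑ i, |dotp (η i) (η i₀)|) := by
        field_simp
      rw [expand]
      nlinarith [mul_le_mul_of_nonneg_left h1 (abs_nonneg (κ i₀)), hspos.le,
        mul_le_mul_of_nonneg_left (mul_le_mul_of_nonneg_left h1 (abs_nonneg (κ i₀))) hspos.le]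
    calc s * |κ i₀| / q * |dotp (η i) (η i₀)| ≤ s * C2 := h2
      _ ≤ ε := by nlinarith [hspos.le, hC1nn, hseq]
  have hκ₂i₀ : κ₂ i₀ = (1 + s) * κ i₀ := by
    rw [hκ₂]
    simp only
    rw [hdv' i₀, ← hq]
    field_simp
  have hcent₂ : centroid η κ₂ = centroid η κ + v' := centroid_translate η κ v' hbd hvol
  have hcents : centroid η κs = (1 + s) • centroid η κ :=
    centroid_dilate η κ (by linarith : (0:ℝ) < 1 + s) hbd hvol
  have hagree2 : ∀ j, j ∉ Finset.univ.erase i₀ → κs j = κ₂ j := by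
    intro j hj
    have hji : j = i₀ := by
      by_contra hne
      exact hj (Finset.mem_erase.2 ⟨hne, Finset.mem_univ j⟩)
    rw [hji, hκ₂i₀]
  have heq2 := chain_eq η κ H i₀ hε hchamber hsym (Finset.univ.erase i₀)
    (Finset.notMem_erase i₀ _) κs κ₂ hκsmem hκ₂mem hagree2
  rw [hcents, hcent₂, dotp_smul_right, dotp_add_right] at heq2
  have hHv' : dotp H v' = a * (s * κ i₀) := by
    rw [hv', dotp_smul_right, dotp_comm H (η i₀)]
    have : dotp (η i₀) H = a * q := by
      rw [ha]
      field_simp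
    rw [this]
    field_simp
  rw [hHv'] at heq2
  have hFval : dotp H (centroid η κ) = a * κ i₀ := by
    have : s * dotp H (centroid η κ) = s * (a * κ i₀) := by ring_nf; ring_nf at heq2; linarith
    exact mul_left_cancel₀ hspos.ne' this
  -- Step D : contradiction with the centroid being interior
  have hlt : dotp (η i₀) (centroid η κ) < κ i₀ :=
    dotp_centroid_lt i₀ hρ hM hMpos hmargin hbd
  have hFeq : dotp H (centroid η κ) = a * dotp (η i₀) (centroid η κ) := by
    rw [hHau, dotp_comm, dotp_smul_right, dotp_comm (centroid η κ) (η i₀)]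
  have : a * dotp (η i₀) (centroid η κ) = a * κ i₀ := by rw [← hFeq, hFval]
  exact absurd (mul_left_cancel₀ hane this) hlt.ne
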